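/- Let w > 0 and C₂, C₃ ≥ 0. Define step sizes α_t = 4/(w·(t+1)) for t ∈ ℕ. Let e : ℕ → ℝ be a sequence with e_t ≥ 0 for all t, satisfying e_{t+1} ≤ (1 − α_t·w)·e_t + α_t²·C₂ + α_t³·C₃ for all t. Then for every T ∈ ℕ, Σ_{t=0}^{T} t·e_t ≤ (8·C₂/w²)·Σ_{t=0}^{T} t/(t+1) + (32·C₃/w³)·Σ_{t=0}^{T} t/(t+1)². -/

import Mathlib

/-- Telescoping estimate proving Corollary 2 (linearly decaying step-size):
with `α_t = 4/(w(t+1))` and the one-step progress recursion, the weighted sums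
of the errors are bounded as stated. -/
theorem stmt_7 (w C₂ C₃ : ℝ) (hw : 0 < w) (hC₂ : 0 ≤ C₂) (hC₃ : 0 ≤ C₃)
    (α : ℕ → ℝ) (hα : ∀ t : ℕ, α t = 4 / (w * (t + 1)))
    (e : ℕ → ℝ) (he : ∀ t, 0 ≤ e t)
    (hrec : ∀ t, e (t + 1) ≤ (1 - α t * w) * e t + (α t) ^ 2 * C₂ + (α t) ^ 3 * C₃) :
    ∀ T : ℕ, ∑ t ∈ Finset.range (T + 1), (t : ℝ) * e t
      ≤ (8 * C₂ / w ^ 2) * ∑ t ∈ Finset.range (T + 1), (t : ℝ) / (t + 1)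
        + (32 * C₃ / w ^ 3) * ∑ t ∈ Finset.range (T + 1), (t : ℝ) / (t + 1) ^ 2 := by
  -- per-step inequality
  have hstep : ∀ t : ℕ, (t : ℝ) * (t + 1) * e (t + 1) + 2 * t * e t
      ≤ ((t : ℝ) - 1) * t * e t
        + (16 * C₂ / w ^ 2) * ((t : ℝ) / (t + 1))
        + (64 * C₃ / w ^ 3) * ((t : ℝ) / (t + 1) ^ 2) := by
    intro t
    have h := hrec t
    rw [hα] at h
    have hA : (0 : ℝ) < (t : ℝ) + 1 := by positivity
    have ht : (0 : ℝ) ≤ (t : ℝ) := Nat.cast_nonneg t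
    have hαw : 4 / (w * ((t : ℝ) + 1)) * w = 4 / ((t : ℝ) + 1) := by
      field_simp
    rw [hαw] at h
    have hsq : (4 / (w * ((t : ℝ) + 1))) ^ 2 = 16 / (w ^ 2 * ((t : ℝ) + 1) ^ 2) := by
      field_simp; ring
    have hcb : (4 / (w * ((t : ℝ) + 1))) ^ 3 = 64 / (w ^ 3 * ((t : ℝ) + 1) ^ 3) := by
      field_simp; ring
    rw [hsq, hcb] at h
    -- multiply by t*(t+1)
    have hmul : (t : ℝ) * (t + 1) * e (t + 1)
        ≤ (t : ℝ) * (t + 1) * ((1 - 4 / ((t : ℝ) + 1)) * e t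
            + 16 / (w ^ 2 * ((t : ℝ) + 1) ^ 2) * C₂
            + 64 / (w ^ 3 * ((t : ℝ) + 1) ^ 3) * C₃) := by
      apply mul_le_mul_of_nonneg_left h (by positivity)
    have key : (t : ℝ) * (t + 1) * ((1 - 4 / ((t : ℝ) + 1)) * e t
            + 16 / (w ^ 2 * ((t : ℝ) + 1) ^ 2) * C₂
            + 64 / (w ^ 3 * ((t : ℝ) + 1) ^ 3) * C₃)
        = ((t : ℝ) - 1) * t * e t - 2 * t * e t
          + (16 * C₂ / w ^ 2) * ((t : ℝ) / (t + 1))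
          + (64 * C₃ / w ^ 3) * ((t : ℝ) / (t + 1) ^ 2) := by
      field_simp
      ring
    linarith [hmul, key ▸ hmul]
  -- strengthened induction
  have haux : ∀ T : ℕ, (T : ℝ) * (T + 1) * e (T + 1)
      + 2 * ∑ t ∈ Finset.range (T + 1), (t : ℝ) * e t
      ≤ ∑ t ∈ Finset.range (T + 1),
          ((16 * C₂ / w ^ 2) * ((t : ℝ) / (t + 1))
            + (64 * C₃ / w ^ 3) * ((t : ℝ) / (t + 1) ^ 2)) := by
    intro T
    induction T with
    | zero => simp
    | succ T ih =>
      rw [Finset.sum_range_succ, Finset.sum_range_succ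
        (f := fun t => (16 * C₂ / w ^ 2) * ((t : ℝ) / (t + 1))
            + (64 * C₃ / w ^ 3) * ((t : ℝ) / (t + 1) ^ 2))]
      have hs := hstep (T + 1)
      push_cast at hs ⊢
      linarith
  intro T
  have h := haux T
  have hpos : (0 : ℝ) ≤ (T : ℝ) * (T + 1) * e (T + 1) := by
    have := he (T + 1); positivity
  have hsum : ∑ t ∈ Finset.range (T + 1),
      ((16 * C₂ / w ^ 2) * ((t : ℝ) / (t + 1))
        + (64 * C₃ / w ^ 3) * ((t : ℝ) / (t + 1) ^ 2))
      = (16 * C₂ / w ^ 2) * ∑ t ∈ Finset.range (T + 1), (t : ℝ) / (t + 1)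
        + (64 * C₃ / w ^ 3) * ∑ t ∈ Finset.range (T + 1), (t : ℝ) / (t + 1) ^ 2 := by
    rw [Finset.sum_add_distrib, Finset.mul_sum, Finset.mul_sum]
  rw [hsum] at h
  have e1 : (16 * C₂ / w ^ 2) = 2 * (8 * C₂ / w ^ 2) := by ring
  have e2 : (64 * C₃ / w ^ 3) = 2 * (32 * C₃ / w ^ 3) := by ring
  rw [e1, e2] at h
  linarith
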